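/- A Riemannian almost product manifold (M,P,g) has zero invariant bisectional curvature (i.e. R(x,Px,y,Py) = 0 for all x,y) if and only if R(x,Py,Pz,w) − R(x,Py,z,Pw) + R(Px,y,z,Pw) − R(Px,y,Pz,w) = 0 for all vector fields x,y,z,w. -/
import Mathlib


open RealInnerProductSpace in
/-- Theorem 3.2 of the paper.  A Riemannian almost product manifold `(M,P,g)`
has zero invariant bisectional curvature, i.e. `R(x,Px,y,Py) = 0` for all
`x,y`, if and only if
`R(x,Py,Pz,w) − R(x,Py,z,Pw) + R(Px,y,z,Pw) − R(Px,y,Pz,w) = 0`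
for all `x,y,z,w`. -/
theorem zero_invariant_bisectional_curvature_iff
    {V : Type*} [NormedAddCommGroup V] [InnerProductSpace ℝ V]
    (P : V →ₗ[ℝ] V)
    (R4 : V →ₗ[ℝ] V →ₗ[ℝ] V →ₗ[ℝ] V →ₗ[ℝ] ℝ)
    (hP2 : ∀ x : V, P (P x) = x)
    (hPg : ∀ x y : V, ⟪P x, P y⟫ = ⟪x, y⟫)
    -- symmetries of the Riemann curvature tensor
    (hA1 : ∀ x y z w : V, R4 x y z w = - R4 y x z w)
    (hA2 : ∀ x y z w : V, R4 x y z w = - R4 x y w z)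
    (hpair : ∀ x y z w : V, R4 x y z w = R4 z w x y)
    (hBianchi : ∀ x y z w : V, R4 x y z w + R4 y z x w + R4 z x y w = 0) :
    (∀ x y : V, R4 x (P x) y (P y) = 0) ↔
    (∀ x y z w : V,
      R4 x (P y) (P z) w - R4 x (P y) z (P w)
        + R4 (P x) y z (P w) - R4 (P x) y (P z) w = 0) := by
  constructor
  · intro h
    -- Polarize in the first variable.
    have hA : ∀ x z y : V, R4 x (P z) y (P y) + R4 z (P x) y (P y) = 0 := by
      intro x z y
      have hx := h (x + z) y
      simp only [map_add, LinearMap.add_apply] at hx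
      have h1 := h x y
      have h2 := h z y
      linarith
    -- Polarize in the second variable.
    have hI : ∀ x z y w : V,
        R4 x (P z) y (P w) + R4 x (P z) w (P y)
          + R4 z (P x) y (P w) + R4 z (P x) w (P y) = 0 := by
      intro x z y w
      have hx := hA x z (y + w)
      simp only [map_add, LinearMap.add_apply] at hx
      have h1 := hA x z y
      have h2 := hA x z w
      linarith
    intro x y z w
    have key := hI x y z w
    have e1 := hA1 y (P x) z (P w)
    have e2 := hA2 x (P y) w (P z)
    have e3 := hA1 y (P x) w (P z)
    have e4 := hA2 (P x) y w (P z)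
    linarith
  · intro h x y
    have key := h x x y y
    have e1 := hA1 (P x) x y (P y)
    have e2 := hA1 (P x) x (P y) y
    have e3 := hA2 x (P x) (P y) y
    linarith
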